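/- For every real z ≥ 1 and every real δ > 0, the number of positive integers n ≤ z with φ(n)/n ≤ δ is less than 4.5·δ²·z. -/

import Mathlib

open Finset ArithmeticFunction

/-- weight at a prime -/
noncomputable def wS (p : ℕ) : ℝ := (2 * (p:ℝ) - 1) / ((p:ℝ) * ((p:ℝ) - 1) ^ 2)

noncomputable def HS : ArithmeticFunction ℝ :=
  ⟨fun d => if Squarefree d then ∏ p ∈ d.primeFactors, (2 * (p:ℝ) - 1) / ((p:ℝ) - 1) ^ 2 else 0,
   by simp [not_squarefree_zero]⟩

@[simp] lemma HS_apply (d : ℕ) :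
    HS d = if Squarefree d then ∏ p ∈ d.primeFactors, (2 * (p:ℝ) - 1) / ((p:ℝ) - 1) ^ 2 else 0 :=
  rfl

lemma HS_nonneg (d : ℕ) : 0 ≤ HS d := by
  rw [HS_apply]
  split
  · apply Finset.prod_nonneg
    intro p hp
    have h2 : 2 ≤ p := (Nat.prime_of_mem_primeFactors hp).two_le
    have h2' : (2:ℝ) ≤ p := by exact_mod_cast h2
    apply div_nonneg (by linarith) (by positivity)
  · exact le_refl _

noncomputable def FS : ArithmeticFunction ℝ :=
  ⟨fun n => if n = 0 then 0 else ((n:ℝ) / (n.totient : ℝ)) ^ 2, by simp⟩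

@[simp] lemma FS_apply (n : ℕ) :
    FS n = if n = 0 then 0 else ((n:ℝ) / (n.totient : ℝ)) ^ 2 := rfl

lemma FS_nonneg (n : ℕ) : 0 ≤ FS n := by
  rw [FS_apply]
  split
  · exact le_refl _
  · positivity

lemma HS_mult : HS.IsMultiplicative := by
  constructor
  · simp [squarefree_one]
  · intro m n hmn
    by_cases hm : Squarefree m
    · by_cases hn : Squarefree n
      · have hmn' : Squarefree (m * n) := (Nat.squarefree_mul hmn).mpr ⟨hm, hn⟩
        rw [HS_apply, HS_apply, HS_apply, if_pos hmn', if_pos hm, if_pos hn,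
          Nat.Coprime.primeFactors_mul hmn,
          Finset.prod_union (Nat.Coprime.disjoint_primeFactors hmn)]
      · have : ¬ Squarefree (m * n) := fun h => hn ((Nat.squarefree_mul hmn).mp h).2
        rw [HS_apply, HS_apply, HS_apply, if_neg this, if_neg hn, mul_zero]
    · have : ¬ Squarefree (m * n) := fun h => hm ((Nat.squarefree_mul hmn).mp h).1
      rw [HS_apply, HS_apply, if_neg this, if_neg hm, zero_mul]

lemma FS_mult : FS.IsMultiplicative := by
  constructor
  · simp
  · intro m n hmn
    rcases eq_or_ne m 0 with rfl | hm
    · simp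
    rcases eq_or_ne n 0 with rfl | hn
    · simp
    rw [FS_apply, FS_apply, FS_apply, if_neg hm, if_neg hn, if_neg (mul_ne_zero hm hn),
      Nat.totient_mul hmn]
    push_cast
    rw [← mul_pow, div_mul_div_comm]

lemma FS_eq : FS = ↑(ArithmeticFunction.zeta : ArithmeticFunction ℕ) * HS := by
  rw [ArithmeticFunction.IsMultiplicative.eq_iff_eq_on_prime_powers FS FS_mult _
    (isMultiplicative_zeta.natCast.mul HS_mult)]
  intro p i hp
  rw [coe_zeta_mul_apply, Nat.sum_divisors_prime_pow hp]
  rcases Nat.eq_zero_or_pos i with rfl | hi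
  · simp [squarefree_one]
  obtain ⟨j, rfl⟩ := Nat.exists_eq_add_of_lt hi
  rw [zero_add]
  rw [Finset.sum_range_succ']
  rw [Finset.sum_range_succ']
  have hz : ∀ x ∈ Finset.range j, HS (p ^ (x + 1 + 1)) = 0 := by
    intro x _
    rw [HS_apply, if_neg]
    rw [Nat.squarefree_pow_iff hp.ne_one (by omega)]
    rintro ⟨-, h⟩; omega
  rw [Finset.sum_congr rfl hz, Finset.sum_const, smul_zero, zero_add, pow_zero, pow_one]
  have hHp : HS p = (2 * (p:ℝ) - 1) / ((p:ℝ) - 1) ^ 2 := by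
    rw [HS_apply, if_pos hp.squarefree, Nat.Prime.primeFactors hp, Finset.prod_singleton]
  have hφ : (Nat.totient (p ^ (j + 1)) : ℝ) = (p:ℝ) ^ j * ((p:ℝ) - 1) := by
    rw [Nat.totient_prime_pow hp (Nat.succ_pos j)]
    push_cast [Nat.cast_sub hp.one_le]
    ring_nf
  rw [FS_apply, if_neg (pow_ne_zero _ hp.pos.ne'), hφ, hHp]
  have hp1 : (1:ℝ) < p := by exact_mod_cast hp.one_lt
  have h1 : ((p:ℝ) - 1) ≠ 0 := by linarith
  have h2 : (p:ℝ) ≠ 0 := by linarith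
  have h3 : (p:ℝ) ^ j ≠ 0 := pow_ne_zero _ h2
  push_cast
  rw [show HS 1 = 1 by simp [squarefree_one]]
  field_simp
  ring

lemma FS_divisor_sum (n : ℕ) : FS n = ∑ d ∈ n.divisors, HS d := by
  rw [FS_eq, coe_zeta_mul_apply]

lemma divisors_eq_filter {n N : ℕ} (hn : n ∈ Finset.Icc 1 N) :
    n.divisors = (Finset.Icc 1 N).filter (fun d => d ∣ n) := by
  rw [Finset.mem_Icc] at hn
  ext d
  simp only [Nat.mem_divisors, Finset.mem_filter, Finset.mem_Icc]
  constructor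
  · rintro ⟨hd, hn0⟩
    have h1 : 0 < d := Nat.pos_of_dvd_of_pos hd (by omega)
    have h2 : d ≤ n := Nat.le_of_dvd (by omega) hd
    exact ⟨⟨h1, le_trans h2 hn.2⟩, hd⟩
  · rintro ⟨-, hd⟩
    exact ⟨hd, by omega⟩

lemma sum_FS_le (N : ℕ) :
    ∑ n ∈ Finset.Icc 1 N, FS n ≤ (N:ℝ) * ∑ d ∈ Finset.Icc 1 N, HS d / d := by
  have step1 : ∑ n ∈ Finset.Icc 1 N, FS n
      = ∑ d ∈ Finset.Icc 1 N, ((N / d : ℕ) : ℝ) * HS d := by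
    calc ∑ n ∈ Finset.Icc 1 N, FS n
        = ∑ n ∈ Finset.Icc 1 N, ∑ d ∈ Finset.Icc 1 N, if d ∣ n then HS d else 0 := by
          refine Finset.sum_congr rfl fun n hn => ?_
          rw [FS_divisor_sum, divisors_eq_filter hn, Finset.sum_filter]
      _ = ∑ d ∈ Finset.Icc 1 N, ∑ n ∈ Finset.Icc 1 N, if d ∣ n then HS d else 0 :=
          Finset.sum_comm
      _ = ∑ d ∈ Finset.Icc 1 N, ((N / d : ℕ) : ℝ) * HS d := by
          refine Finset.sum_congr rfl fun d _ => ?_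
          have hIcc : Finset.Icc 1 N = Finset.Ioc 0 N := by ext x; simp; omega
          rw [← Finset.sum_filter, Finset.sum_const, hIcc,
            Nat.Ioc_filter_dvd_card_eq_div, nsmul_eq_mul]
  rw [step1, Finset.mul_sum]
  refine Finset.sum_le_sum fun d hd => ?_
  calc ((N / d : ℕ) : ℝ) * HS d ≤ ((N:ℝ) / d) * HS d :=
        mul_le_mul_of_nonneg_right Nat.cast_div_le (HS_nonneg d)
    _ = (N:ℝ) * (HS d / d) := by ring

lemma HS_div_eq_prod {d : ℕ} (hd : Squarefree d) :
    HS d / d = ∏ p ∈ d.primeFactors, wS p := by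
  have hcast : (d:ℝ) = ∏ p ∈ d.primeFactors, (p:ℝ) := by
    rw [← Nat.cast_prod, Nat.prod_primeFactors_of_squarefree hd]
  rw [HS_apply, if_pos hd, hcast, ← Finset.prod_div_distrib]
  refine Finset.prod_congr rfl fun p _ => ?_
  rw [wS, div_div]; ring

lemma sum_HS_div_le_prod (N : ℕ) :
    ∑ d ∈ Finset.Icc 1 N, HS d / d
      ≤ ∏ p ∈ (Finset.Icc 1 N).filter Nat.Prime, (1 + wS p) := by
  classical
  set P := (Finset.Icc 1 N).filter Nat.Prime with hP
  have wS_nonneg : ∀ p ∈ P, 0 ≤ wS p := by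
    intro p hp
    have hp' : p.Prime := (Finset.mem_filter.mp hp).2
    have h2 : (2:ℝ) ≤ p := by exact_mod_cast hp'.two_le
    exact div_nonneg (by linarith) (by positivity)
  have step1 : ∑ d ∈ Finset.Icc 1 N, HS d / d
      = ∑ d ∈ (Finset.Icc 1 N).filter Squarefree, HS d / d := by
    rw [Finset.sum_filter_of_ne]
    intro d _ hne
    by_contra h
    rw [HS_apply, if_neg h, zero_div] at hne
    exact hne rfl
  have step2 : ∑ d ∈ (Finset.Icc 1 N).filter Squarefree, HS d / d
      = ∑ T ∈ ((Finset.Icc 1 N).filter Squarefree).image Nat.primeFactors,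
          ∏ p ∈ T, wS p := by
    rw [Finset.sum_image]
    · refine Finset.sum_congr rfl fun d hd => ?_
      exact HS_div_eq_prod (Finset.mem_filter.mp hd).2
    · intro a ha b hb hab
      have ha' := (Finset.mem_filter.mp ha).2
      have hb' := (Finset.mem_filter.mp hb).2
      rw [← Nat.prod_primeFactors_of_squarefree ha', ← Nat.prod_primeFactors_of_squarefree hb',
        hab]
  have step3 : ((Finset.Icc 1 N).filter Squarefree).image Nat.primeFactors ⊆ P.powerset := by
    intro T hT
    obtain ⟨d, hd, rfl⟩ := Finset.mem_image.mp hT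
    rw [Finset.mem_powerset]
    intro p hp
    have hp' := Nat.prime_of_mem_primeFactors hp
    have hdvd := Nat.dvd_of_mem_primeFactors hp
    rw [Finset.mem_filter, Finset.mem_Icc] at hd ⊢
    have hd1 : 1 ≤ d := hd.1.1
    exact ⟨⟨hp'.one_le, le_trans (Nat.le_of_dvd (by omega) hdvd) hd.1.2⟩, hp'⟩
  have step4 : ∑ T ∈ ((Finset.Icc 1 N).filter Squarefree).image Nat.primeFactors,
      ∏ p ∈ T, wS p ≤ ∑ T ∈ P.powerset, ∏ p ∈ T, wS p := by
    refine Finset.sum_le_sum_of_subset_of_nonneg step3 fun T hT _ => ?_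
    refine Finset.prod_nonneg fun p hp => ?_
    exact wS_nonneg p (Finset.mem_powerset.mp hT hp)
  have step5 : ∑ T ∈ P.powerset, ∏ p ∈ T, wS p = ∏ p ∈ P, (1 + wS p) := by
    have := Finset.prod_add wS (fun _ => (1:ℝ)) P
    simp only [Finset.prod_const_one, mul_one] at this
    rw [show (∏ p ∈ P, (1 + wS p)) = ∏ p ∈ P, (wS p + 1) by
      exact Finset.prod_congr rfl fun p _ => add_comm _ _, this]
  rw [step1, step2, ← step5]
  exact step4

def smallL : List ℕ := [2,3,5,7,11,13,17,19,23,29,31,37,41,43,47,53,59,61,67,71,73,79,83,89,97]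

def smallP : Finset ℕ := smallL.toFinset

set_option maxRecDepth 4000 in
lemma small_mem : ∀ p < 101, Nat.Prime p → p ∈ smallP := by decide

set_option maxHeartbeats 1000000 in
lemma smallP_prod_le : ∏ p ∈ smallP, (1 + wS p) ≤ 4.415 := by
  have hnd : smallL.Nodup := by decide
  rw [smallP, List.prod_toFinset _ hnd]
  norm_num [smallL, wS]

noncomputable def vS (k : ℕ) : ℝ := 1/(2*(k:ℝ) - 2) - 1/(2*(k:ℝ))

lemma tel_eq : ∀ K : ℕ, 50 ≤ K →
    ∑ k ∈ Finset.Icc 50 K, vS k = 1/98 - 1/(2*(K:ℝ)) := by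
  intro K hK
  induction K, hK using Nat.le_induction with
  | base => norm_num [vS]
  | succ K hK ih =>
    rw [Finset.sum_Icc_succ_top (by omega), ih, vS]
    have hK' : (50:ℝ) ≤ K := by exact_mod_cast hK
    push_cast
    have h2 : 2*((K:ℝ)+1) - 2 = 2*(K:ℝ) := by ring
    rw [h2]
    ring

lemma tel_le (K : ℕ) :
    ∑ k ∈ Finset.Icc 50 K, vS k ≤ 1/98 := by
  rcases lt_or_ge K 50 with h | h
  · rw [Finset.Icc_eq_empty (by omega)]
    norm_num
  · rw [tel_eq K h]
    have : (0:ℝ) < K := by exact_mod_cast (by omega : 0 < K)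
    have : 0 < 2*(K:ℝ) := by linarith
    have : 0 < 1/(2*(K:ℝ)) := by positivity
    linarith

lemma tail_sum (N : ℕ) :
    ∑ p ∈ ((Finset.Icc 1 N).filter Nat.Prime).filter (fun p => ¬ p < 101), wS p ≤ 1/98 := by
  classical
  set t := ((Finset.Icc 1 N).filter Nat.Prime).filter (fun p => ¬ p < 101) with ht
  have hmem : ∀ p ∈ t, p.Prime ∧ 101 ≤ p ∧ p ≤ N := by
    intro p hp
    rw [ht, Finset.mem_filter, Finset.mem_filter, Finset.mem_Icc] at hp
    exact ⟨hp.1.2, by omega, hp.1.1.2⟩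
  have hodd : ∀ p ∈ t, p % 2 = 1 := by
    intro p hp
    obtain ⟨hp', h101, -⟩ := hmem p hp
    have hne2 : p ≠ 2 := by omega
    exact Nat.odd_iff.mp (hp'.odd_of_ne_two hne2)
  have key : ∀ p ∈ t, wS p ≤ vS (p / 2) := by
    intro p hp
    obtain ⟨hp', h101, -⟩ := hmem p hp
    have hmod := hodd p hp
    set k := p / 2 with hk
    have hp2 : p = 2 * k + 1 := by omega
    have hk50 : 50 ≤ k := by omega
    have hpc : (p:ℝ) = 2 * (k:ℝ) + 1 := by rw [hp2]; push_cast; ring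
    have hx : (50:ℝ) ≤ (k:ℝ) := by exact_mod_cast hk50
    rw [wS, hpc, vS]
    have h2x2 : (0:ℝ) < 2*(k:ℝ) - 2 := by linarith
    have h2x : (0:ℝ) < 2*(k:ℝ) := by linarith
    rw [div_sub_div _ _ (ne_of_gt h2x2) (ne_of_gt h2x), div_le_div_iff₀ (by nlinarith) (by positivity)]
    nlinarith [sq_nonneg ((k:ℝ))]
  calc ∑ p ∈ t, wS p
      ≤ ∑ p ∈ t, vS (p / 2) := Finset.sum_le_sum key
    _ = ∑ k ∈ t.image (fun p : ℕ => p / 2), vS k := by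
        refine (Finset.sum_image ?_).symm
        intro p hp q hq hpq
        have h1 := hodd p hp
        have h2 := hodd q hq
        simp only at hpq
        omega
    _ ≤ ∑ k ∈ Finset.Icc 50 N, vS k := by
        refine Finset.sum_le_sum_of_subset_of_nonneg ?_ ?_
        · intro k hk
          obtain ⟨p, hp, rfl⟩ := Finset.mem_image.mp hk
          obtain ⟨-, h101, hN⟩ := hmem p hp
          rw [Finset.mem_Icc]
          omega
        · intro k hk _
          rw [Finset.mem_Icc] at hk
          have hx : (50:ℝ) ≤ (k:ℝ) := by exact_mod_cast hk.1
          rw [vS, sub_nonneg]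
          apply one_div_le_one_div_of_le <;> linarith
    _ ≤ 1/98 := tel_le N

lemma prod_one_add_mul_one_sub_le (s : Finset ℕ) (x : ℕ → ℝ) (hx : ∀ i ∈ s, 0 ≤ x i) :
    (∏ i ∈ s, (1 + x i)) * (1 - ∑ i ∈ s, x i) ≤ 1 := by
  classical
  induction s using Finset.induction_on with
  | empty => simp
  | @insert a s ha ih =>
    have hxa : 0 ≤ x a := hx a (Finset.mem_insert_self a s)
    have hx' : ∀ i ∈ s, 0 ≤ x i := fun i hi => hx i (Finset.mem_insert_of_mem hi)
    have ihs := ih hx'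
    have hP : 0 ≤ ∏ i ∈ s, (1 + x i) :=
      Finset.prod_nonneg fun i hi => by have := hx' i hi; linarith
    have hS : 0 ≤ ∑ i ∈ s, x i := Finset.sum_nonneg hx'
    rw [Finset.prod_insert ha, Finset.sum_insert ha]
    nlinarith [mul_nonneg hP (mul_nonneg hxa (add_nonneg hxa hS))]

lemma tail_prod_le (N : ℕ) :
    ∏ p ∈ ((Finset.Icc 1 N).filter Nat.Prime).filter (fun p => ¬ p < 101), (1 + wS p)
      ≤ 98/97 := by
  classical
  set t := ((Finset.Icc 1 N).filter Nat.Prime).filter (fun p => ¬ p < 101) with ht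
  have hw : ∀ p ∈ t, 0 ≤ wS p := by
    intro p hp
    rw [ht, Finset.mem_filter, Finset.mem_filter] at hp
    have h2 : (2:ℝ) ≤ p := by exact_mod_cast hp.1.2.two_le
    exact div_nonneg (by linarith) (by positivity)
  have hsum : ∑ p ∈ t, wS p ≤ 1/98 := tail_sum N
  have hmul := prod_one_add_mul_one_sub_le t wS hw
  have h1 : (97:ℝ)/98 ≤ 1 - ∑ p ∈ t, wS p := by linarith
  have h2 : (0:ℝ) < 1 - ∑ p ∈ t, wS p := by linarith
  have hP : 0 ≤ ∏ p ∈ t, (1 + wS p) :=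
    Finset.prod_nonneg fun p hp => by have := hw p hp; linarith
  nlinarith

lemma prod_le_const (N : ℕ) :
    ∏ p ∈ (Finset.Icc 1 N).filter Nat.Prime, (1 + wS p) ≤ 4.415 * (98/97) := by
  classical
  set P := (Finset.Icc 1 N).filter Nat.Prime with hPdef
  have hw : ∀ p ∈ P, 0 ≤ wS p := by
    intro p hp
    rw [hPdef, Finset.mem_filter] at hp
    have h2 : (2:ℝ) ≤ p := by exact_mod_cast hp.2.two_le
    exact div_nonneg (by linarith) (by positivity)
  rw [← Finset.prod_filter_mul_prod_filter_not P (fun p => p < 101)]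
  have hsmall : ∏ p ∈ P.filter (fun p => p < 101), (1 + wS p) ≤ 4.415 := by
    have hsub : P.filter (fun p => p < 101) ⊆ smallP := by
      intro p hp
      rw [Finset.mem_filter, hPdef, Finset.mem_filter] at hp
      exact small_mem p hp.2 hp.1.2
    have hone : ∀ p ∈ smallP, (1:ℝ) ≤ 1 + wS p := by
      intro p hp
      have h2 : 2 ≤ p := by
        rw [smallP, List.mem_toFinset] at hp
        simp [smallL] at hp
        omega
      have h2' : (2:ℝ) ≤ p := by exact_mod_cast h2
      have : 0 ≤ wS p := div_nonneg (by linarith) (by positivity)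
      linarith
    have hnn : (0:ℝ) ≤ ∏ p ∈ P.filter (fun p => p < 101), (1 + wS p) := by
      refine Finset.prod_nonneg fun p hp => ?_
      have := hone p (hsub hp); linarith
    calc ∏ p ∈ P.filter (fun p => p < 101), (1 + wS p)
        ≤ (∏ p ∈ smallP \ P.filter (fun p => p < 101), (1 + wS p)) *
            ∏ p ∈ P.filter (fun p => p < 101), (1 + wS p) := by
          refine le_mul_of_one_le_left hnn ?_
          calc (1:ℝ) = ∏ p ∈ smallP \ P.filter (fun p => p < 101), 1 :=
                (Finset.prod_const_one).symm
            _ ≤ _ := Finset.prod_le_prod (fun _ _ => zero_le_one)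
                (fun p hp => hone p (Finset.mem_sdiff.mp hp).1)
      _ = ∏ p ∈ smallP, (1 + wS p) := Finset.prod_sdiff hsub
      _ ≤ 4.415 := smallP_prod_le
  have htail : ∏ p ∈ P.filter (fun p => ¬ p < 101), (1 + wS p) ≤ 98/97 := tail_prod_le N
  have hsp : (0:ℝ) ≤ ∏ p ∈ P.filter (fun p => ¬ p < 101), (1 + wS p) :=
    Finset.prod_nonneg fun p hp => by
      have := hw p (Finset.mem_of_mem_filter p hp); linarith
  calc (∏ p ∈ P.filter (fun p => p < 101), (1 + wS p)) *
        ∏ p ∈ P.filter (fun p => ¬ p < 101), (1 + wS p)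
      ≤ 4.415 * (98/97) := by
        apply mul_le_mul hsmall htail hsp (by norm_num)

lemma core_sum (N : ℕ) : ∑ n ∈ Finset.Icc 1 N, FS n ≤ (4.415 * (98/97)) * N := by
  calc ∑ n ∈ Finset.Icc 1 N, FS n ≤ (N:ℝ) * ∑ d ∈ Finset.Icc 1 N, HS d / d := sum_FS_le N
    _ ≤ (N:ℝ) * (4.415 * (98/97)) := by
        refine mul_le_mul_of_nonneg_left ?_ (Nat.cast_nonneg N)
        exact le_trans (sum_HS_div_le_prod N) (prod_le_const N)
    _ = (4.415 * (98/97)) * N := by ring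

/-- For every real `z ≥ 1` and every `δ > 0`, the number of positive integers `n ≤ z` with
`φ(n)/n ≤ δ` is less than `4.5·δ²·z`. -/
theorem stmt_17 (z : ℝ) (hz : 1 ≤ z) (δ : ℝ) (hδ : 0 < δ) :
    ({n : ℕ | 1 ≤ n ∧ (n : ℝ) ≤ z ∧ (Nat.totient n : ℝ) / n ≤ δ}.ncard : ℝ) <
      4.5 * δ ^ 2 * z := by
  classical
  set N := ⌊z⌋₊ with hN
  have hz0 : (0:ℝ) ≤ z := by linarith
  have hfl : (N:ℝ) ≤ z := Nat.floor_le hz0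
  set B := (Finset.Icc 1 N).filter (fun n => (Nat.totient n : ℝ) / n ≤ δ) with hB
  have hset : {n : ℕ | 1 ≤ n ∧ (n : ℝ) ≤ z ∧ (Nat.totient n : ℝ) / n ≤ δ} = ↑B := by
    ext n
    simp only [Set.mem_setOf_eq, hB, Finset.coe_filter, Finset.mem_Icc]
    constructor
    · rintro ⟨h1, h2, h3⟩
      exact ⟨⟨h1, Nat.le_floor h2⟩, h3⟩
    · rintro ⟨⟨h1, h2⟩, h3⟩
      refine ⟨h1, le_trans ?_ hfl, h3⟩
      exact_mod_cast h2
  rw [hset, Set.ncard_coe_finset]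
  have hpoint : ∀ n ∈ B, (1:ℝ) ≤ δ^2 * FS n := by
    intro n hn
    rw [hB, Finset.mem_filter, Finset.mem_Icc] at hn
    obtain ⟨⟨h1, -⟩, h3⟩ := hn
    have hn0 : n ≠ 0 := by omega
    have hnpos : (0:ℝ) < n := by exact_mod_cast Nat.pos_of_ne_zero hn0
    have hφpos : 0 < n.totient := Nat.totient_pos.mpr (Nat.pos_of_ne_zero hn0)
    have hφ : (0:ℝ) < n.totient := by exact_mod_cast hφpos
    have hle : (n.totient : ℝ) ≤ δ * n := by
      rw [div_le_iff₀ hnpos] at h3; exact h3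
    have h1' : (1:ℝ) ≤ δ * ((n:ℝ) / n.totient) := by
      rw [mul_div_assoc', le_div_iff₀ hφ, one_mul]
      exact le_trans hle (by nlinarith)
    have : (1:ℝ) ≤ (δ * ((n:ℝ) / n.totient))^2 := one_le_pow₀ h1'
    rw [FS_apply, if_neg hn0]
    nlinarith
  have hcard : (B.card : ℝ) ≤ δ^2 * ∑ n ∈ B, FS n := by
    rw [Finset.mul_sum]
    calc (B.card : ℝ) = ∑ _n ∈ B, (1:ℝ) := by simp
      _ ≤ ∑ n ∈ B, δ^2 * FS n := Finset.sum_le_sum hpoint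
  have hmono : ∑ n ∈ B, FS n ≤ ∑ n ∈ Finset.Icc 1 N, FS n := by
    refine Finset.sum_le_sum_of_subset_of_nonneg (Finset.filter_subset _ _) ?_
    exact fun n _ _ => FS_nonneg n
  have hcore := core_sum N
  have hδ2 : (0:ℝ) < δ^2 := by positivity
  have hfinal : (B.card : ℝ) ≤ δ^2 * ((4.415 * (98/97)) * z) := by
    calc (B.card : ℝ) ≤ δ^2 * ∑ n ∈ B, FS n := hcard
      _ ≤ δ^2 * ∑ n ∈ Finset.Icc 1 N, FS n := by nlinarith [hmono]
      _ ≤ δ^2 * ((4.415 * (98/97)) * N) := by nlinarith [hcore]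
      _ ≤ δ^2 * ((4.415 * (98/97)) * z) := by nlinarith [hfl]
  have hlt : (4.415 * (98/97)) * z < 4.5 * z := by nlinarith
  calc (B.card : ℝ) ≤ δ^2 * ((4.415 * (98/97)) * z) := hfinal
    _ < δ^2 * (4.5 * z) := by exact mul_lt_mul_of_pos_left hlt hδ2
    _ = 4.5 * δ^2 * z := by ring
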